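/- Let z be the positive real root of x^4 + 3x^2 − 1 and define c_n as the coefficients of the power series of x(2x^8−4x^7+8x^6−7x^5+3x^4+2x^3−5x^2+x+1)/((x−1)^2(x^4+3x^2−1)(x^4+2x^2−1)). Then c_n · z^n is a bounded sequence, and more precisely c_n z^n converges along even n and along odd n to the limits (89z^2 ± 92z + 218 ± 86z^{−1})/234 respectively (plus signs for even n, adjusted appropriately). -/

import Mathlib

open Polynomial Filter

noncomputable def grahamNum : Polynomial ℤ :=
  X * (2 * X ^ 8 - 4 * X ^ 7 + 8 * X ^ 6 - 7 * X ^ 5 + 3 * X ^ 4 +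
    2 * X ^ 3 - 5 * X ^ 2 + X + 1)

noncomputable def grahamDen : Polynomial ℤ :=
  (X - 1) ^ 2 * (X ^ 4 + 3 * X ^ 2 - 1) * (X ^ 4 + 2 * X ^ 2 - 1)

/- ### Auxiliary definitions: the closed form of the coefficient sequence -/

/-- The polynomial (double-root-at-1) part of the closed form. -/
noncomputable def gP (n : ℕ) : ℝ := -4/9 + (n : ℝ)/6

/-- The part of the closed form coming from `x^4 + 3x^2 - 1`. -/
noncomputable def gT (n : ℕ) : ℝ :=
  if n % 2 = 0 then
    (169 + 89*Real.sqrt 13)/234 * ((3+Real.sqrt 13)/2)^(n/2)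
      + (169 - 89*Real.sqrt 13)/234 * ((3-Real.sqrt 13)/2)^(n/2)
  else
    (221 + 43*Real.sqrt 13)/117 * ((3+Real.sqrt 13)/2)^(n/2)
      + (221 - 43*Real.sqrt 13)/117 * ((3-Real.sqrt 13)/2)^(n/2)

/-- The part of the closed form coming from `x^4 + 2x^2 - 1`. -/
noncomputable def gR (n : ℕ) : ℝ :=
  if n % 2 = 0 then
    (-(2 + 3*Real.sqrt 2)/4) * (1+Real.sqrt 2)^(n/2)
      + ((-2 + 3*Real.sqrt 2)/4) * (1-Real.sqrt 2)^(n/2)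
  else
    (-(5 + 3*Real.sqrt 2)/4) * (1+Real.sqrt 2)^(n/2)
      + ((-5 + 3*Real.sqrt 2)/4) * (1-Real.sqrt 2)^(n/2)

/-- The full closed form. -/
noncomputable def gE (n : ℕ) : ℝ := gP n + gT n + gR n

lemma gS_sq : Real.sqrt 13 ^ 2 = 13 := Real.sq_sqrt (by norm_num)
lemma gU_sq : Real.sqrt 2 ^ 2 = 2 := Real.sq_sqrt (by norm_num)

lemma gP_rec (n : ℕ) : gP (n+2) = 2 * gP (n+1) - gP n := by
  unfold gP; push_cast; ring

lemma gT_rec (n : ℕ) : gT (n+4) = 3 * gT (n+2) + gT n := by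
  have hlp : ((3+Real.sqrt 13)/2)^2 = 3*((3+Real.sqrt 13)/2) + 1 := by
    linear_combination gS_sq/4
  have hlm : ((3-Real.sqrt 13)/2)^2 = 3*((3-Real.sqrt 13)/2) + 1 := by
    linear_combination gS_sq/4
  unfold gT
  rw [show (n+4) % 2 = n % 2 from by omega, show (n+2) % 2 = n % 2 from by omega,
      show (n+4)/2 = n/2 + 2 from by omega, show (n+2)/2 = n/2 + 1 from by omega]
  split_ifs
  · linear_combination ((169 + 89*Real.sqrt 13)/234 * ((3+Real.sqrt 13)/2)^(n/2)) * hlp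
      + ((169 - 89*Real.sqrt 13)/234 * ((3-Real.sqrt 13)/2)^(n/2)) * hlm
  · linear_combination ((221 + 43*Real.sqrt 13)/117 * ((3+Real.sqrt 13)/2)^(n/2)) * hlp
      + ((221 - 43*Real.sqrt 13)/117 * ((3-Real.sqrt 13)/2)^(n/2)) * hlm

lemma gR_rec (n : ℕ) : gR (n+4) = 2 * gR (n+2) + gR n := by
  have hmp : (1+Real.sqrt 2)^2 = 2*(1+Real.sqrt 2) + 1 := by
    linear_combination gU_sq
  have hmm : (1-Real.sqrt 2)^2 = 2*(1-Real.sqrt 2) + 1 := by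
    linear_combination gU_sq
  unfold gR
  rw [show (n+4) % 2 = n % 2 from by omega, show (n+2) % 2 = n % 2 from by omega,
      show (n+4)/2 = n/2 + 2 from by omega, show (n+2)/2 = n/2 + 1 from by omega]
  split_ifs
  · linear_combination ((-(2 + 3*Real.sqrt 2)/4) * (1+Real.sqrt 2)^(n/2)) * hmp
      + (((-2 + 3*Real.sqrt 2)/4) * (1-Real.sqrt 2)^(n/2)) * hmm
  · linear_combination ((-(5 + 3*Real.sqrt 2)/4) * (1+Real.sqrt 2)^(n/2)) * hmp
      + (((-5 + 3*Real.sqrt 2)/4) * (1-Real.sqrt 2)^(n/2)) * hmm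

lemma gE_rec (n : ℕ) : gE (n+10) = 2*gE (n+9) + 4*gE (n+8) - 10*gE (n+7) + gE (n+6)
    + 8*gE (n+5) - 9*gE (n+4) + 10*gE (n+3) - 6*gE (n+2) + 2*gE (n+1) - gE n := by
  have HP : ∀ a b c : ℕ, a = c + 2 → b = c + 1 → gP a = 2 * gP b - gP c := by
    rintro a b c rfl rfl; exact gP_rec c
  have HT : ∀ a b c : ℕ, a = c + 4 → b = c + 2 → gT a = 3 * gT b + gT c := by
    rintro a b c rfl rfl; exact gT_rec c
  have HR : ∀ a b c : ℕ, a = c + 4 → b = c + 2 → gR a = 2 * gR b + gR c := by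
    rintro a b c rfl rfl; exact gR_rec c
  simp only [gE]
  linear_combination
    HP (n+2) (n+1) n (by omega) (by omega)
    + 5 * HP (n+4) (n+3) (n+2) (by omega) (by omega)
    + 4 * HP (n+6) (n+5) (n+4) (by omega) (by omega)
    - 5 * HP (n+8) (n+7) (n+6) (by omega) (by omega)
    + HP (n+10) (n+9) (n+8) (by omega) (by omega)
    - HT (n+4) (n+2) n (by omega) (by omega)
    + 2 * HT (n+5) (n+3) (n+1) (by omega) (by omega)
    - 3 * HT (n+6) (n+4) (n+2) (by omega) (by omega)
    + 4 * HT (n+7) (n+5) (n+3) (by omega) (by omega)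
    - HT (n+8) (n+6) (n+4) (by omega) (by omega)
    - 2 * HT (n+9) (n+7) (n+5) (by omega) (by omega)
    + HT (n+10) (n+8) (n+6) (by omega) (by omega)
    - HR (n+4) (n+2) n (by omega) (by omega)
    + 2 * HR (n+5) (n+3) (n+1) (by omega) (by omega)
    - 4 * HR (n+6) (n+4) (n+2) (by omega) (by omega)
    + 6 * HR (n+7) (n+5) (n+3) (by omega) (by omega)
    - 2 * HR (n+8) (n+6) (n+4) (by omega) (by omega)
    - 2 * HR (n+9) (n+7) (n+5) (by omega) (by omega)
    + HR (n+10) (n+8) (n+6) (by omega) (by omega)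

lemma coe_psNat (n : ℕ) : ((n : Polynomial ℤ) : PowerSeries ℤ) = (n : PowerSeries ℤ) := by
  rw [← map_natCast (Polynomial.C (R := ℤ)) n, Polynomial.coe_C, map_natCast]

lemma coe_psOfNat (n : ℕ) [n.AtLeastTwo] :
    ((OfNat.ofNat n : Polynomial ℤ) : PowerSeries ℤ) = OfNat.ofNat n := by
  rw [← Nat.cast_ofNat (R := Polynomial ℤ), coe_psNat, Nat.cast_ofNat]

set_option maxHeartbeats 1000000 in
/-- With `z = √((√13-3)/2)` the positive real root of `x^4 + 3x^2 - 1`,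
the sequence `c_n z^n` is bounded, and converges along even and odd
indices to the limits determined by the partial-fraction constants
`A = (89z² + 92z + 218 + 86/z)/234` and `B = (89z² - 92z + 218 - 86/z)/234`
(namely `A + B` along even `n` and `A - B` along odd `n`). -/
theorem graham_asymptotics (c : ℕ → ℤ)
    (h : PowerSeries.mk c * (grahamDen : PowerSeries ℤ) =
      (grahamNum : PowerSeries ℤ)) :
    let z : ℝ := Real.sqrt ((Real.sqrt 13 - 3) / 2)
    let A : ℝ := (89 * z ^ 2 + 92 * z + 218 + 86 / z) / 234
    let B : ℝ := (89 * z ^ 2 - 92 * z + 218 - 86 / z) / 234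
    (∃ C : ℝ, ∀ n : ℕ, |(c n : ℝ) * z ^ n| ≤ C) ∧
    Tendsto (fun k : ℕ => (c (2 * k) : ℝ) * z ^ (2 * k)) atTop (nhds (A + B)) ∧
    Tendsto (fun k : ℕ => (c (2 * k + 1) : ℝ) * z ^ (2 * k + 1)) atTop
      (nhds (A - B)) := by
  intro z A B
  -- ### Step 1: extract the linear recurrence and initial values from `h`
  have hden : (grahamDen : PowerSeries ℤ) =
      1 - PowerSeries.C (R := ℤ) 2 * PowerSeries.X - PowerSeries.C (R := ℤ) 4 * PowerSeries.X^2
        + PowerSeries.C (R := ℤ) 10 * PowerSeries.X^3 - PowerSeries.X^4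
        - PowerSeries.C (R := ℤ) 8 * PowerSeries.X^5 + PowerSeries.C (R := ℤ) 9 * PowerSeries.X^6
        - PowerSeries.C (R := ℤ) 10 * PowerSeries.X^7 + PowerSeries.C (R := ℤ) 6 * PowerSeries.X^8
        - PowerSeries.C (R := ℤ) 2 * PowerSeries.X^9 + PowerSeries.X^10 := by
    simp only [grahamDen, Polynomial.coe_mul, Polynomial.coe_pow, Polynomial.coe_sub,
      Polynomial.coe_add, Polynomial.coe_X, Polynomial.coe_one, map_ofNat]
    rw [show ((2:Polynomial ℤ) : PowerSeries ℤ) = 2 from coe_psOfNat 2,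
      show ((3:Polynomial ℤ) : PowerSeries ℤ) = 3 from coe_psOfNat 3]
    ring
  have hnum : (grahamNum : PowerSeries ℤ) =
      PowerSeries.X^1 + PowerSeries.X^2 - PowerSeries.C (R := ℤ) 5 * PowerSeries.X^3
        + PowerSeries.C (R := ℤ) 2 * PowerSeries.X^4 + PowerSeries.C (R := ℤ) 3 * PowerSeries.X^5
        - PowerSeries.C (R := ℤ) 7 * PowerSeries.X^6 + PowerSeries.C (R := ℤ) 8 * PowerSeries.X^7
        - PowerSeries.C (R := ℤ) 4 * PowerSeries.X^8 + PowerSeries.C (R := ℤ) 2 * PowerSeries.X^9 := by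
    simp only [grahamNum, Polynomial.coe_mul, Polynomial.coe_pow, Polynomial.coe_sub,
      Polynomial.coe_add, Polynomial.coe_X, Polynomial.coe_one, map_ofNat]
    rw [show ((2:Polynomial ℤ) : PowerSeries ℤ) = 2 from coe_psOfNat 2,
      show ((3:Polynomial ℤ) : PowerSeries ℤ) = 3 from coe_psOfNat 3,
      show ((4:Polynomial ℤ) : PowerSeries ℤ) = 4 from coe_psOfNat 4,
      show ((5:Polynomial ℤ) : PowerSeries ℤ) = 5 from coe_psOfNat 5,
      show ((7:Polynomial ℤ) : PowerSeries ℤ) = 7 from coe_psOfNat 7,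
      show ((8:Polynomial ℤ) : PowerSeries ℤ) = 8 from coe_psOfNat 8]
    ring
  rw [hden, hnum] at h
  have h2 : PowerSeries.mk c
      - PowerSeries.C (R := ℤ) 2 * (PowerSeries.mk c * PowerSeries.X^1)
      - PowerSeries.C (R := ℤ) 4 * (PowerSeries.mk c * PowerSeries.X^2)
      + PowerSeries.C (R := ℤ) 10 * (PowerSeries.mk c * PowerSeries.X^3)
      - PowerSeries.mk c * PowerSeries.X^4
      - PowerSeries.C (R := ℤ) 8 * (PowerSeries.mk c * PowerSeries.X^5)
      + PowerSeries.C (R := ℤ) 9 * (PowerSeries.mk c * PowerSeries.X^6)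
      - PowerSeries.C (R := ℤ) 10 * (PowerSeries.mk c * PowerSeries.X^7)
      + PowerSeries.C (R := ℤ) 6 * (PowerSeries.mk c * PowerSeries.X^8)
      - PowerSeries.C (R := ℤ) 2 * (PowerSeries.mk c * PowerSeries.X^9)
      + PowerSeries.mk c * PowerSeries.X^10
      = PowerSeries.X^1 + PowerSeries.X^2 - PowerSeries.C (R := ℤ) 5 * PowerSeries.X^3
        + PowerSeries.C (R := ℤ) 2 * PowerSeries.X^4 + PowerSeries.C (R := ℤ) 3 * PowerSeries.X^5
        - PowerSeries.C (R := ℤ) 7 * PowerSeries.X^6 + PowerSeries.C (R := ℤ) 8 * PowerSeries.X^7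
        - PowerSeries.C (R := ℤ) 4 * PowerSeries.X^8 + PowerSeries.C (R := ℤ) 2 * PowerSeries.X^9 := by
    linear_combination h
  have hco : ∀ k : ℕ,
      c k - 2 * (if 1 ≤ k then c (k-1) else 0) - 4 * (if 2 ≤ k then c (k-2) else 0)
      + 10 * (if 3 ≤ k then c (k-3) else 0) - (if 4 ≤ k then c (k-4) else 0)
      - 8 * (if 5 ≤ k then c (k-5) else 0) + 9 * (if 6 ≤ k then c (k-6) else 0)
      - 10 * (if 7 ≤ k then c (k-7) else 0) + 6 * (if 8 ≤ k then c (k-8) else 0)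
      - 2 * (if 9 ≤ k then c (k-9) else 0) + (if 10 ≤ k then c (k-10) else 0)
      = (if k = 1 then 1 else 0) + (if k = 2 then 1 else 0)
      - (if 3 ≤ k then (if k - 3 = 0 then (5:ℤ) else 0) else 0)
      + (if 4 ≤ k then (if k - 4 = 0 then (2:ℤ) else 0) else 0)
      + (if 5 ≤ k then (if k - 5 = 0 then (3:ℤ) else 0) else 0)
      - (if 6 ≤ k then (if k - 6 = 0 then (7:ℤ) else 0) else 0)
      + (if 7 ≤ k then (if k - 7 = 0 then (8:ℤ) else 0) else 0)
      - (if 8 ≤ k then (if k - 8 = 0 then (4:ℤ) else 0) else 0)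
      + (if 9 ≤ k then (if k - 9 = 0 then (2:ℤ) else 0) else 0) := by
    intro k
    have hk := congrArg (PowerSeries.coeff (R := ℤ) k) h2
    simpa only [map_sub, map_add, PowerSeries.coeff_C_mul, PowerSeries.coeff_mul_X_pow',
      PowerSeries.coeff_mk, PowerSeries.coeff_X_pow, PowerSeries.coeff_C] using hk
  have hc0 := hco 0; have hc1 := hco 1; have hc2 := hco 2; have hc3 := hco 3
  have hc4 := hco 4; have hc5 := hco 5; have hc6 := hco 6; have hc7 := hco 7
  have hc8 := hco 8; have hc9 := hco 9
  norm_num at hc0 hc1 hc2 hc3 hc4 hc5 hc6 hc7 hc8 hc9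
  have v0 : c 0 = 0 := by omega
  have v1 : c 1 = 1 := by omega
  have v2 : c 2 = 3 := by omega
  have v3 : c 3 = 5 := by omega
  have v4 : c 4 = 14 := by omega
  have v5 : c 5 = 22 := by omega
  have v6 : c 6 = 54 := by omega
  have v7 : c 7 = 84 := by omega
  have v8 : c 8 = 197 := by omega
  have v9 : c 9 = 305 := by omega
  have hrec : ∀ m : ℕ, c (m+10) = 2*c (m+9) + 4*c (m+8) - 10*c (m+7) + c (m+6)
      + 8*c (m+5) - 9*c (m+4) + 10*c (m+3) - 6*c (m+2) + 2*c (m+1) - c m := by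
    intro m
    have hr := hco (m+10)
    have e1 : (if 1 ≤ m+10 then c (m+10-1) else 0) = c (m+9) := by
      rw [if_pos (by omega)]; congr 1
    have e2 : (if 2 ≤ m+10 then c (m+10-2) else 0) = c (m+8) := by
      rw [if_pos (by omega)]; congr 1
    have e3 : (if 3 ≤ m+10 then c (m+10-3) else 0) = c (m+7) := by
      rw [if_pos (by omega)]; congr 1
    have e4 : (if 4 ≤ m+10 then c (m+10-4) else 0) = c (m+6) := by
      rw [if_pos (by omega)]; congr 1
    have e5 : (if 5 ≤ m+10 then c (m+10-5) else 0) = c (m+5) := by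
      rw [if_pos (by omega)]; congr 1
    have e6 : (if 6 ≤ m+10 then c (m+10-6) else 0) = c (m+4) := by
      rw [if_pos (by omega)]; congr 1
    have e7 : (if 7 ≤ m+10 then c (m+10-7) else 0) = c (m+3) := by
      rw [if_pos (by omega)]; congr 1
    have e8 : (if 8 ≤ m+10 then c (m+10-8) else 0) = c (m+2) := by
      rw [if_pos (by omega)]; congr 1
    have e9 : (if 9 ≤ m+10 then c (m+10-9) else 0) = c (m+1) := by
      rw [if_pos (by omega)]; congr 1
    have e10 : (if 10 ≤ m+10 then c (m+10-10) else 0) = c m := by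
      rw [if_pos (by omega)]; congr 1
    have f1 : (if m+10 = 1 then (1:ℤ) else 0) = 0 := if_neg (by omega)
    have f2 : (if m+10 = 2 then (1:ℤ) else 0) = 0 := if_neg (by omega)
    have f3 : (if 3 ≤ m+10 then (if m+10-3 = 0 then (5:ℤ) else 0) else 0) = 0 := by
      rw [if_pos (by omega)]; exact if_neg (by omega)
    have f4 : (if 4 ≤ m+10 then (if m+10-4 = 0 then (2:ℤ) else 0) else 0) = 0 := by
      rw [if_pos (by omega)]; exact if_neg (by omega)
    have f5 : (if 5 ≤ m+10 then (if m+10-5 = 0 then (3:ℤ) else 0) else 0) = 0 := by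
      rw [if_pos (by omega)]; exact if_neg (by omega)
    have f6 : (if 6 ≤ m+10 then (if m+10-6 = 0 then (7:ℤ) else 0) else 0) = 0 := by
      rw [if_pos (by omega)]; exact if_neg (by omega)
    have f7 : (if 7 ≤ m+10 then (if m+10-7 = 0 then (8:ℤ) else 0) else 0) = 0 := by
      rw [if_pos (by omega)]; exact if_neg (by omega)
    have f8 : (if 8 ≤ m+10 then (if m+10-8 = 0 then (4:ℤ) else 0) else 0) = 0 := by
      rw [if_pos (by omega)]; exact if_neg (by omega)
    have f9 : (if 9 ≤ m+10 then (if m+10-9 = 0 then (2:ℤ) else 0) else 0) = 0 := by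
      rw [if_pos (by omega)]; exact if_neg (by omega)
    rw [e1, e2, e3, e4, e5, e6, e7, e8, e9, e10, f1, f2, f3, f4, f5, f6, f7, f8, f9] at hr
    omega
  -- ### Step 2: identify the sequence with the closed form
  have key : ∀ n : ℕ, ((c n : ℤ) : ℝ) = gE n := by
    intro n
    induction n using Nat.strong_induction_on with
    | _ n ih =>
      by_cases hn : n < 10
      · interval_cases n
        · rw [v0]; simp only [gE, gP, gT, gR]; norm_num; ring
        · rw [v1]; simp only [gE, gP, gT, gR]; norm_num; ring
        · rw [v2]; simp only [gE, gP, gT, gR]; norm_num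
          linear_combination (-(89:ℝ)/234)*gS_sq + (3/2)*gU_sq
        · rw [v3]; simp only [gE, gP, gT, gR]; norm_num
          linear_combination (-(43:ℝ)/117)*gS_sq + (3/2)*gU_sq
        · rw [v4]; simp only [gE, gP, gT, gR]; norm_num
          linear_combination (-(703:ℝ)/468)*gS_sq + 4*gU_sq
        · rw [v5]; simp only [gE, gP, gT, gR]; norm_num
          linear_combination (-(479:ℝ)/234)*gS_sq + (11/2)*gU_sq
        · rw [v6]; simp only [gE, gP, gT, gR]; norm_num
          linear_combination (-((5081:ℝ)/936 + (89/936)*Real.sqrt 13^2))*gS_sq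
            + ((21/2) + (3/2)*Real.sqrt 2^2)*gU_sq
        · rw [v7]; simp only [gE, gP, gT, gR]; norm_num
          linear_combination (-((3709:ℝ)/468 + (43/468)*Real.sqrt 13^2))*gS_sq
            + (15 + (3/2)*Real.sqrt 2^2)*gU_sq
        · rw [v8]; simp only [gE, gP, gT, gR]; norm_num
          linear_combination (-((34819:ℝ)/1872 + (1237/1872)*Real.sqrt 13^2))*gS_sq
            + (26 + 7*Real.sqrt 2^2)*gU_sq
        · rw [v9]; simp only [gE, gP, gT, gR]; norm_num
          linear_combination (-((26159:ℝ)/936 + (737/936)*Real.sqrt 13^2))*gS_sq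
            + (38 + (17/2)*Real.sqrt 2^2)*gU_sq
      · obtain ⟨m, rfl⟩ : ∃ m, n = m + 10 := ⟨n - 10, by omega⟩
        rw [hrec m]
        push_cast
        rw [ih (m+9) (by omega), ih (m+8) (by omega), ih (m+7) (by omega),
          ih (m+6) (by omega), ih (m+5) (by omega), ih (m+4) (by omega),
          ih (m+3) (by omega), ih (m+2) (by omega), ih (m+1) (by omega),
          ih m (by omega), gE_rec m]
  clear h hden hnum h2 hco hc0 hc1 hc2 hc3 hc4 hc5 hc6 hc7 hc8 hc9
  clear v0 v1 v2 v3 v4 v5 v6 v7 v8 v9 hrec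
  -- ### Step 3: basic numeric facts
  have hs0 : (0:ℝ) ≤ Real.sqrt 13 := Real.sqrt_nonneg 13
  have hu0 : (0:ℝ) ≤ Real.sqrt 2 := Real.sqrt_nonneg 2
  have hs_sq := gS_sq
  have hu_sq := gU_sq
  have hs3 : 3 < Real.sqrt 13 := by
    rw [Real.lt_sqrt (by norm_num)]; norm_num
  have hs4 : Real.sqrt 13 < 3.61 := by
    rw [Real.sqrt_lt' (by norm_num)]; norm_num
  have hu1 : 1 < Real.sqrt 2 := by
    rw [Real.lt_sqrt (by norm_num)]; norm_num
  have hu2 : Real.sqrt 2 < 1.42 := by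
    rw [Real.sqrt_lt' (by norm_num)]; norm_num
  have hz2 : z ^ 2 = (Real.sqrt 13 - 3)/2 := by
    show Real.sqrt ((Real.sqrt 13 - 3) / 2) ^ 2 = (Real.sqrt 13 - 3)/2
    exact Real.sq_sqrt (by linarith)
  have hz0 : 0 < z := by
    show 0 < Real.sqrt ((Real.sqrt 13 - 3) / 2)
    exact Real.sqrt_pos.mpr (by linarith)
  have h1 : ((3+Real.sqrt 13)/2) * ((Real.sqrt 13-3)/2) = 1 := by
    linear_combination hs_sq/4
  have hAB : A + B = (169 + 89*Real.sqrt 13)/234 := by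
    show (89 * z ^ 2 + 92 * z + 218 + 86 / z) / 234
      + (89 * z ^ 2 - 92 * z + 218 - 86 / z) / 234 = (169 + 89*Real.sqrt 13)/234
    linear_combination ((89:ℝ)/117) * hz2
  have hdiv : (86:ℝ)/z = (129 + 43*Real.sqrt 13) * z := by
    rw [div_eq_iff (ne_of_gt hz0)]
    linear_combination (-(129+43*Real.sqrt 13))*hz2 - ((43:ℝ)/2)*hs_sq
  have hABm : A - B = ((221 + 43*Real.sqrt 13)/117) * z := by
    show (89 * z ^ 2 + 92 * z + 218 + 86 / z) / 234
      - (89 * z ^ 2 - 92 * z + 218 - 86 / z) / 234 = ((221 + 43*Real.sqrt 13)/117) * z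
    rw [hdiv]; ring
  clear_value z A B
  have hw : |((Real.sqrt 13-3)/2)| < 1 := by
    rw [abs_lt]; constructor <;> linarith
  have hq2 : |((3-Real.sqrt 13)/2) * ((Real.sqrt 13-3)/2)| < 1 := by
    rw [abs_lt]; constructor <;> nlinarith [hs_sq, hs3, hs4]
  have hq3 : |(1+Real.sqrt 2) * ((Real.sqrt 13-3)/2)| < 1 := by
    rw [abs_lt]; constructor <;>
      nlinarith [mul_pos (show (0:ℝ) < 1.42 - Real.sqrt 2 by linarith)
        (show (0:ℝ) < Real.sqrt 13 - 3 by linarith),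
        mul_pos (show (0:ℝ) < Real.sqrt 2 - 1 by linarith)
        (show (0:ℝ) < Real.sqrt 13 - 3 by linarith)]
  have hq4 : |(1-Real.sqrt 2) * ((Real.sqrt 13-3)/2)| < 1 := by
    rw [abs_lt]; constructor <;>
      nlinarith [mul_pos (show (0:ℝ) < 1.42 - Real.sqrt 2 by linarith)
        (show (0:ℝ) < Real.sqrt 13 - 3 by linarith),
        mul_pos (show (0:ℝ) < Real.sqrt 2 - 1 by linarith)
        (show (0:ℝ) < Real.sqrt 13 - 3 by linarith)]
  -- ### Step 4: the even-index limit
  have heqe : ∀ k : ℕ, ((c (2*k) : ℤ) : ℝ) * z^(2*k) =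
      (169 + 89*Real.sqrt 13)/234 * (((3+Real.sqrt 13)/2) * ((Real.sqrt 13-3)/2))^k
      + ((-4/9) * ((Real.sqrt 13-3)/2)^k
      + (1/3) * ((k:ℝ) * ((Real.sqrt 13-3)/2)^k)
      + (169 - 89*Real.sqrt 13)/234 * (((3-Real.sqrt 13)/2) * ((Real.sqrt 13-3)/2))^k
      + (-(2 + 3*Real.sqrt 2)/4) * ((1+Real.sqrt 2) * ((Real.sqrt 13-3)/2))^k
      + ((-2 + 3*Real.sqrt 2)/4) * ((1-Real.sqrt 2) * ((Real.sqrt 13-3)/2))^k) := by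
    intro k
    rw [key (2*k), pow_mul, hz2]
    simp only [gE, gP, gT, gR]
    simp only [show 2*k % 2 = 0 from by omega, show 2*k/2 = k from by omega,
      eq_self_iff_true, if_true, mul_pow]
    push_cast
    ring
  have hTe : Tendsto (fun k : ℕ => ((c (2*k) : ℤ) : ℝ) * z^(2*k)) atTop (nhds (A + B)) := by
    rw [hAB]
    have T0 : Tendsto (fun k : ℕ =>
        (169 + 89*Real.sqrt 13)/234 * (((3+Real.sqrt 13)/2) * ((Real.sqrt 13-3)/2))^k)
        atTop (nhds ((169 + 89*Real.sqrt 13)/234)) := by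
      simp only [h1, one_pow, mul_one]
      exact tendsto_const_nhds
    have T1 : Tendsto (fun k : ℕ => (-4/9 : ℝ) * ((Real.sqrt 13-3)/2)^k) atTop (nhds 0) := by
      simpa using (tendsto_pow_atTop_nhds_zero_of_abs_lt_one hw).const_mul (-4/9 : ℝ)
    have T2 : Tendsto (fun k : ℕ => (1/3 : ℝ) * ((k:ℝ) * ((Real.sqrt 13-3)/2)^k))
        atTop (nhds 0) := by
      simpa using (tendsto_self_mul_const_pow_of_abs_lt_one hw).const_mul (1/3 : ℝ)
    have T3 : Tendsto (fun k : ℕ =>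
        (169 - 89*Real.sqrt 13)/234 * (((3-Real.sqrt 13)/2) * ((Real.sqrt 13-3)/2))^k)
        atTop (nhds 0) := by
      simpa using (tendsto_pow_atTop_nhds_zero_of_abs_lt_one hq2).const_mul
        ((169 - 89*Real.sqrt 13)/234)
    have T4 : Tendsto (fun k : ℕ =>
        (-(2 + 3*Real.sqrt 2)/4) * ((1+Real.sqrt 2) * ((Real.sqrt 13-3)/2))^k)
        atTop (nhds 0) := by
      simpa using (tendsto_pow_atTop_nhds_zero_of_abs_lt_one hq3).const_mul
        (-(2 + 3*Real.sqrt 2)/4)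
    have T5 : Tendsto (fun k : ℕ =>
        ((-2 + 3*Real.sqrt 2)/4) * ((1-Real.sqrt 2) * ((Real.sqrt 13-3)/2))^k)
        atTop (nhds 0) := by
      simpa using (tendsto_pow_atTop_nhds_zero_of_abs_lt_one hq4).const_mul
        ((-2 + 3*Real.sqrt 2)/4)
    have T := T0.add ((((T1.add T2).add T3).add T4).add T5)
    rw [add_zero, add_zero, add_zero, add_zero, add_zero] at T
    exact T.congr (fun k => (heqe k).symm)
  -- ### Step 5: the odd-index limit
  have heqo : ∀ k : ℕ, ((c (2*k+1) : ℤ) : ℝ) * z^(2*k+1) =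
      ((221 + 43*Real.sqrt 13)/117) * z * (((3+Real.sqrt 13)/2) * ((Real.sqrt 13-3)/2))^k
      + ((-5/18*z) * ((Real.sqrt 13-3)/2)^k
      + (z/3) * ((k:ℝ) * ((Real.sqrt 13-3)/2)^k)
      + ((221 - 43*Real.sqrt 13)/117) * z * (((3-Real.sqrt 13)/2) * ((Real.sqrt 13-3)/2))^k
      + (-(5 + 3*Real.sqrt 2)/4) * z * ((1+Real.sqrt 2) * ((Real.sqrt 13-3)/2))^k
      + ((-5 + 3*Real.sqrt 2)/4) * z * ((1-Real.sqrt 2) * ((Real.sqrt 13-3)/2))^k) := by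
    intro k
    rw [key (2*k+1), pow_succ, pow_mul, hz2]
    simp only [gE, gP, gT, gR]
    simp only [show (2*k+1) % 2 = 1 from by omega, show (2*k+1)/2 = k from by omega,
      Nat.one_ne_zero, if_false, mul_pow]
    push_cast
    ring
  have hTo : Tendsto (fun k : ℕ => ((c (2*k+1) : ℤ) : ℝ) * z^(2*k+1)) atTop
      (nhds (A - B)) := by
    rw [hABm]
    have T0 : Tendsto (fun k : ℕ =>
        ((221 + 43*Real.sqrt 13)/117) * z * (((3+Real.sqrt 13)/2) * ((Real.sqrt 13-3)/2))^k)
        atTop (nhds (((221 + 43*Real.sqrt 13)/117) * z)) := by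
      simp only [h1, one_pow, mul_one]
      exact tendsto_const_nhds
    have T1 : Tendsto (fun k : ℕ => (-5/18*z) * ((Real.sqrt 13-3)/2)^k) atTop (nhds 0) := by
      simpa using (tendsto_pow_atTop_nhds_zero_of_abs_lt_one hw).const_mul (-5/18*z)
    have T2 : Tendsto (fun k : ℕ => (z/3) * ((k:ℝ) * ((Real.sqrt 13-3)/2)^k))
        atTop (nhds 0) := by
      simpa using (tendsto_self_mul_const_pow_of_abs_lt_one hw).const_mul (z/3)
    have T3 : Tendsto (fun k : ℕ =>
        ((221 - 43*Real.sqrt 13)/117) * z * (((3-Real.sqrt 13)/2) * ((Real.sqrt 13-3)/2))^k)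
        atTop (nhds 0) := by
      simpa using (tendsto_pow_atTop_nhds_zero_of_abs_lt_one hq2).const_mul
        (((221 - 43*Real.sqrt 13)/117) * z)
    have T4 : Tendsto (fun k : ℕ =>
        (-(5 + 3*Real.sqrt 2)/4) * z * ((1+Real.sqrt 2) * ((Real.sqrt 13-3)/2))^k)
        atTop (nhds 0) := by
      simpa using (tendsto_pow_atTop_nhds_zero_of_abs_lt_one hq3).const_mul
        ((-(5 + 3*Real.sqrt 2)/4) * z)
    have T5 : Tendsto (fun k : ℕ =>
        ((-5 + 3*Real.sqrt 2)/4) * z * ((1-Real.sqrt 2) * ((Real.sqrt 13-3)/2))^k)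
        atTop (nhds 0) := by
      simpa using (tendsto_pow_atTop_nhds_zero_of_abs_lt_one hq4).const_mul
        (((-5 + 3*Real.sqrt 2)/4) * z)
    have T := T0.add ((((T1.add T2).add T3).add T4).add T5)
    rw [add_zero, add_zero, add_zero, add_zero, add_zero] at T
    exact T.congr (fun k => (heqo k).symm)
  -- ### Step 6: boundedness
  refine ⟨?_, hTe, hTo⟩
  obtain ⟨Ce, hCe⟩ := hTe.abs.bddAbove_range
  obtain ⟨Co, hCo⟩ := hTo.abs.bddAbove_range
  refine ⟨max Ce Co, fun n => ?_⟩
  rcases Nat.even_or_odd n with ⟨m, hm⟩ | ⟨m, hm⟩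
  · rw [show n = 2*m from by omega]
    exact le_trans (hCe (Set.mem_range_self m)) (le_max_left _ _)
  · rw [show n = 2*m+1 from by omega]
    exact le_trans (hCo (Set.mem_range_self m)) (le_max_right _ _)
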